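/- The set of (ℤ/2)-characteristic matrices over P₁⁴(8) whose first four columns form the 4×4 identity matrix is exactly the three-element set {b₁, b₂, b₃}: each bᵢ satisfies the nonsingularity condition at all twenty vertices in V₁, and every 4×8 matrix over ℤ/2 with identity first block satisfying the nonsingularity condition equals one of b₁, b₂, b₃. -/

import Mathlib

open Matrix

def V1 : List (Fin 4 → Fin 8) :=
  [![0,1,2,3], ![0,1,2,4], ![0,1,3,7], ![0,1,4,5], ![0,1,5,6], ![0,1,6,7], ![0,2,3,4], ![0,3,4,5], ![0,3,5,6], ![0,3,6,7], ![1,2,3,7], ![1,2,4,5], ![1,2,5,7], ![1,5,6,7], ![2,3,4,6], ![2,3,6,7], ![2,4,5,7], ![2,4,6,7], ![3,4,5,6], ![4,5,6,7]]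
def b1 : Matrix (Fin 4) (Fin 8) (ZMod 2) :=
  !![1, 0, 0, 0, 1, 0, 0, 1;
    0, 1, 0, 0, 1, 1, 1, 0;
    0, 0, 1, 0, 0, 1, 0, 1;
    0, 0, 0, 1, 1, 1, 1, 1]
def b2 : Matrix (Fin 4) (Fin 8) (ZMod 2) :=
  !![1, 0, 0, 0, 1, 0, 0, 1;
    0, 1, 0, 0, 1, 1, 1, 1;
    0, 0, 1, 0, 0, 1, 0, 1;
    0, 0, 0, 1, 1, 1, 1, 0]
def b3 : Matrix (Fin 4) (Fin 8) (ZMod 2) :=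
  !![1, 0, 0, 0, 0, 1, 1, 1;
    0, 1, 0, 0, 1, 0, 1, 0;
    0, 0, 1, 0, 0, 1, 0, 1;
    0, 0, 0, 1, 1, 0, 1, 1]

def dd (A : Matrix (Fin 4) (Fin 4) (ZMod 2)) : ZMod 2 :=
    A 0 0 * (A 1 1*A 2 2*A 3 3 + A 1 1*A 2 3*A 3 2 + A 1 2*A 2 1*A 3 3
           + A 1 2*A 2 3*A 3 1 + A 1 3*A 2 1*A 3 2 + A 1 3*A 2 2*A 3 1)
  + A 0 1 * (A 1 0*A 2 2*A 3 3 + A 1 0*A 2 3*A 3 2 + A 1 2*A 2 0*A 3 3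
           + A 1 2*A 2 3*A 3 0 + A 1 3*A 2 0*A 3 2 + A 1 3*A 2 2*A 3 0)
  + A 0 2 * (A 1 0*A 2 1*A 3 3 + A 1 0*A 2 3*A 3 1 + A 1 1*A 2 0*A 3 3
           + A 1 1*A 2 3*A 3 0 + A 1 3*A 2 0*A 3 1 + A 1 3*A 2 1*A 3 0)
  + A 0 3 * (A 1 0*A 2 1*A 3 2 + A 1 0*A 2 2*A 3 1 + A 1 1*A 2 0*A 3 2
           + A 1 1*A 2 2*A 3 0 + A 1 2*A 2 0*A 3 1 + A 1 2*A 2 1*A 3 0)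

theorem det_eq (A : Matrix (Fin 4) (Fin 4) (ZMod 2)) : A.det = dd A := by
  rw [Matrix.det_succ_row_zero]
  simp (config := { decide := true }) only [Fin.sum_univ_succ, Matrix.det_fin_three,
    Matrix.submatrix_apply, Finset.sum_empty, Fin.sum_univ_zero, Fin.succAbove,
    Fin.castSucc_zero, Fin.castSucc_one, Function.comp, dd, Fin.val_zero, Fin.val_succ,
    pow_succ, pow_zero, Fin.val_eq_zero]
  norm_num
  ring_nf
  simp only [CharTwo.sub_eq_add, CharTwo.neg_eq,
    show Fin.succ (2:Fin 3) = (3:Fin 4) from rfl, show Fin.castSucc (2:Fin 3) = (2:Fin 4) from rfl]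
  ring

theorem unit_iff : ∀ x : ZMod 2, IsUnit x ↔ x = 1 := by
  intro x
  rw [isUnit_iff_ne_zero]
  revert x
  decide

def mk (c : Fin 4 → Fin 4 → ZMod 2) : Matrix (Fin 4) (Fin 8) (ZMod 2) :=
  Matrix.of fun i j =>
    if j = 4 then c i 0 else if j = 5 then c i 1 else if j = 6 then c i 2
    else if j = 7 then c i 3 else if (i : ℕ) = (j : ℕ) then 1 else 0

def c1 : Fin 4 → Fin 4 → ZMod 2 := ![![1,0,0,1],![1,1,1,0],![0,1,0,1],![1,1,1,1]]
def c2 : Fin 4 → Fin 4 → ZMod 2 := ![![1,0,0,1],![1,1,1,1],![0,1,0,1],![1,1,1,0]]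
def c3 : Fin 4 → Fin 4 → ZMod 2 := ![![0,1,1,1],![1,0,1,0],![0,1,0,1],![1,0,1,1]]


theorem L0124 (p q r s t u w x y z a b d e f g : ZMod 2) :
    dd ((mk ![![p,q,r,s],![t,u,w,x],![y,z,a,b],![d,e,f,g]]).submatrix id ![0,1,2,4]) = d := by
  simp (config := { decide := true }) [dd, mk, Matrix.submatrix_apply]
  try ring

theorem L0137 (p q r s t u w x y z a b d e f g : ZMod 2) :
    dd ((mk ![![p,q,r,s],![t,u,w,x],![y,z,a,b],![d,e,f,g]]).submatrix id ![0,1,3,7]) = b := by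
  simp (config := { decide := true }) [dd, mk, Matrix.submatrix_apply]
  try ring

theorem L0145 (p q r s t u w x y z a b d e f g : ZMod 2) :
    dd ((mk ![![p,q,r,s],![t,u,w,x],![y,z,a,b],![d,e,f,g]]).submatrix id ![0,1,4,5]) = d*z + e*y := by
  simp (config := { decide := true }) [dd, mk, Matrix.submatrix_apply]
  try ring

theorem L0156 (p q r s t u w x y z a b d e f g : ZMod 2) :
    dd ((mk ![![p,q,r,s],![t,u,w,x],![y,z,a,b],![d,e,f,g]]).submatrix id ![0,1,5,6]) = a*e + f*z := by
  simp (config := { decide := true }) [dd, mk, Matrix.submatrix_apply]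
  try ring

theorem L0167 (p q r s t u w x y z a b d e f g : ZMod 2) :
    dd ((mk ![![p,q,r,s],![t,u,w,x],![y,z,a,b],![d,e,f,g]]).submatrix id ![0,1,6,7]) = a*g + b*f := by
  simp (config := { decide := true }) [dd, mk, Matrix.submatrix_apply]
  try ring

theorem L0234 (p q r s t u w x y z a b d e f g : ZMod 2) :
    dd ((mk ![![p,q,r,s],![t,u,w,x],![y,z,a,b],![d,e,f,g]]).submatrix id ![0,2,3,4]) = t := by
  simp (config := { decide := true }) [dd, mk, Matrix.submatrix_apply]
  try ring

theorem L0345 (p q r s t u w x y z a b d e f g : ZMod 2) :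
    dd ((mk ![![p,q,r,s],![t,u,w,x],![y,z,a,b],![d,e,f,g]]).submatrix id ![0,3,4,5]) = t*z + u*y := by
  simp (config := { decide := true }) [dd, mk, Matrix.submatrix_apply]
  try ring

theorem L0356 (p q r s t u w x y z a b d e f g : ZMod 2) :
    dd ((mk ![![p,q,r,s],![t,u,w,x],![y,z,a,b],![d,e,f,g]]).submatrix id ![0,3,5,6]) = a*u + w*z := by
  simp (config := { decide := true }) [dd, mk, Matrix.submatrix_apply]
  try ring

theorem L0367 (p q r s t u w x y z a b d e f g : ZMod 2) :
    dd ((mk ![![p,q,r,s],![t,u,w,x],![y,z,a,b],![d,e,f,g]]).submatrix id ![0,3,6,7]) = a*x + b*w := by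
  simp (config := { decide := true }) [dd, mk, Matrix.submatrix_apply]
  try ring

theorem L1237 (p q r s t u w x y z a b d e f g : ZMod 2) :
    dd ((mk ![![p,q,r,s],![t,u,w,x],![y,z,a,b],![d,e,f,g]]).submatrix id ![1,2,3,7]) = s := by
  simp (config := { decide := true }) [dd, mk, Matrix.submatrix_apply]
  try ring

theorem L1245 (p q r s t u w x y z a b d e f g : ZMod 2) :
    dd ((mk ![![p,q,r,s],![t,u,w,x],![y,z,a,b],![d,e,f,g]]).submatrix id ![1,2,4,5]) = d*q + e*p := by
  simp (config := { decide := true }) [dd, mk, Matrix.submatrix_apply]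
  try ring

theorem L1257 (p q r s t u w x y z a b d e f g : ZMod 2) :
    dd ((mk ![![p,q,r,s],![t,u,w,x],![y,z,a,b],![d,e,f,g]]).submatrix id ![1,2,5,7]) = e*s + g*q := by
  simp (config := { decide := true }) [dd, mk, Matrix.submatrix_apply]
  try ring

theorem L1567 (p q r s t u w x y z a b d e f g : ZMod 2) :
    dd ((mk ![![p,q,r,s],![t,u,w,x],![y,z,a,b],![d,e,f,g]]).submatrix id ![1,5,6,7]) = a*e*s + a*g*q + b*e*r + b*f*q + f*s*z + g*r*z := by
  simp (config := { decide := true }) [dd, mk, Matrix.submatrix_apply]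
  try ring

theorem L2346 (p q r s t u w x y z a b d e f g : ZMod 2) :
    dd ((mk ![![p,q,r,s],![t,u,w,x],![y,z,a,b],![d,e,f,g]]).submatrix id ![2,3,4,6]) = p*w + r*t := by
  simp (config := { decide := true }) [dd, mk, Matrix.submatrix_apply]
  try ring

theorem L2367 (p q r s t u w x y z a b d e f g : ZMod 2) :
    dd ((mk ![![p,q,r,s],![t,u,w,x],![y,z,a,b],![d,e,f,g]]).submatrix id ![2,3,6,7]) = r*x + s*w := by
  simp (config := { decide := true }) [dd, mk, Matrix.submatrix_apply]
  try ring

theorem L2457 (p q r s t u w x y z a b d e f g : ZMod 2) :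
    dd ((mk ![![p,q,r,s],![t,u,w,x],![y,z,a,b],![d,e,f,g]]).submatrix id ![2,4,5,7]) = d*q*x + d*s*u + e*p*x + e*s*t + g*p*u + g*q*t := by
  simp (config := { decide := true }) [dd, mk, Matrix.submatrix_apply]
  try ring

theorem L2467 (p q r s t u w x y z a b d e f g : ZMod 2) :
    dd ((mk ![![p,q,r,s],![t,u,w,x],![y,z,a,b],![d,e,f,g]]).submatrix id ![2,4,6,7]) = d*r*x + d*s*w + f*p*x + f*s*t + g*p*w + g*r*t := by
  simp (config := { decide := true }) [dd, mk, Matrix.submatrix_apply]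
  try ring

theorem L3456 (p q r s t u w x y z a b d e f g : ZMod 2) :
    dd ((mk ![![p,q,r,s],![t,u,w,x],![y,z,a,b],![d,e,f,g]]).submatrix id ![3,4,5,6]) = a*p*u + a*q*t + p*w*z + q*w*y + r*t*z + r*u*y := by
  simp (config := { decide := true }) [dd, mk, Matrix.submatrix_apply]
  try ring

theorem L4567 (p q r s t u w x y z a b d e f g : ZMod 2) :
    dd ((mk ![![p,q,r,s],![t,u,w,x],![y,z,a,b],![d,e,f,g]]).submatrix id ![4,5,6,7]) = a*d*q*x + a*d*s*u + a*e*p*x + a*e*s*t + a*g*p*u + a*g*q*t + b*d*q*w + b*d*r*u + b*e*p*w + b*e*r*t + b*f*p*u + b*f*q*t + d*r*x*z + d*s*w*z + e*r*x*y + e*s*w*y + f*p*x*z + f*q*x*y + f*s*t*z + f*s*u*y + g*p*w*z + g*q*w*y + g*r*t*z + g*r*u*y := by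
  simp (config := { decide := true }) [dd, mk, Matrix.submatrix_apply]
  try ring

set_option maxRecDepth 100000 in
set_option synthInstance.maxHeartbeats 1000000 in
set_option synthInstance.maxSize 2000 in
set_option maxHeartbeats 40000000 in
theorem key12 : ∀ p q r u w x y z a e f g : ZMod 2,
    (1*z + e*y = 1 ∧
    a*e + f*z = 1 ∧
    a*g + 1*f = 1 ∧
    1*z + u*y = 1 ∧
    a*u + w*z = 1 ∧
    a*x + 1*w = 1 ∧
    1*q + e*p = 1 ∧
    e*1 + g*q = 1 ∧
    a*e*1 + a*g*q + 1*e*r + 1*f*q + f*1*z + g*r*z = 1 ∧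
    p*w + r*1 = 1 ∧
    r*x + 1*w = 1 ∧
    1*q*x + 1*1*u + e*p*x + e*1*1 + g*p*u + g*q*1 = 1 ∧
    1*r*x + 1*1*w + f*p*x + f*1*1 + g*p*w + g*r*1 = 1 ∧
    a*p*u + a*q*1 + p*w*z + q*w*y + r*1*z + r*u*y = 1 ∧
    a*1*q*x + a*1*1*u + a*e*p*x + a*e*1*1 + a*g*p*u + a*g*q*1 + 1*1*q*w + 1*1*r*u + 1*e*p*w + 1*e*r*1 + 1*f*p*u + 1*f*q*1 + 1*r*x*z + 1*1*w*z + e*r*x*y + e*1*w*y + f*p*x*z + f*q*x*y + f*1*1*z + f*1*u*y + g*p*w*z + g*q*w*y + g*r*1*z + g*r*u*y = 1) →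
    (![![p,q,r,1],![1,u,w,x],![y,z,a,1],![1,e,f,g]] = c1 ∨ ![![p,q,r,1],![1,u,w,x],![y,z,a,1],![1,e,f,g]] = c2 ∨ ![![p,q,r,1],![1,u,w,x],![y,z,a,1],![1,e,f,g]] = c3) := by
  decide


/-- The (ℤ/2)-characteristic matrices over P₁⁴(8) with identity first block are
exactly b₁, b₂, b₃. -/
theorem stmt1 (Λ : Matrix (Fin 4) (Fin 8) (ZMod 2)) :
    (Λ.submatrix id (Fin.castLE (by omega : (4:ℕ) ≤ 8)) = 1 ∧
      ∀ v ∈ V1, IsUnit (Λ.submatrix id v).det) ↔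
    (Λ = b1 ∨ Λ = b2 ∨ Λ = b3) := by
  constructor
  · rintro ⟨h1, h2⟩
    have E : ∀ i j : Fin 4, Λ i (Fin.castLE (by omega : (4:ℕ) ≤ 8) j)
        = (1 : Matrix (Fin 4) (Fin 4) (ZMod 2)) i j := fun i j => congrFun (congrFun h1 i) j
    have hL : Λ = mk ![![Λ 0 4, Λ 0 5, Λ 0 6, Λ 0 7],![Λ 1 4, Λ 1 5, Λ 1 6, Λ 1 7],
        ![Λ 2 4, Λ 2 5, Λ 2 6, Λ 2 7],![Λ 3 4, Λ 3 5, Λ 3 6, Λ 3 7]] := by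
      funext i j
      fin_cases j
      · fin_cases i <;> exact (E _ 0).trans rfl
      · fin_cases i <;> exact (E _ 1).trans rfl
      · fin_cases i <;> exact (E _ 2).trans rfl
      · fin_cases i <;> exact (E _ 3).trans rfl
      · fin_cases i <;> rfl
      · fin_cases i <;> rfl
      · fin_cases i <;> rfl
      · fin_cases i <;> rfl
    have m0124 := h2 ![0,1,2,4] (by decide)
    rw [det_eq, unit_iff, hL, L0124] at m0124
    have m0137 := h2 ![0,1,3,7] (by decide)
    rw [det_eq, unit_iff, hL, L0137] at m0137
    have m0145 := h2 ![0,1,4,5] (by decide)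
    rw [det_eq, unit_iff, hL, L0145] at m0145
    have m0156 := h2 ![0,1,5,6] (by decide)
    rw [det_eq, unit_iff, hL, L0156] at m0156
    have m0167 := h2 ![0,1,6,7] (by decide)
    rw [det_eq, unit_iff, hL, L0167] at m0167
    have m0234 := h2 ![0,2,3,4] (by decide)
    rw [det_eq, unit_iff, hL, L0234] at m0234
    have m0345 := h2 ![0,3,4,5] (by decide)
    rw [det_eq, unit_iff, hL, L0345] at m0345
    have m0356 := h2 ![0,3,5,6] (by decide)
    rw [det_eq, unit_iff, hL, L0356] at m0356
    have m0367 := h2 ![0,3,6,7] (by decide)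
    rw [det_eq, unit_iff, hL, L0367] at m0367
    have m1237 := h2 ![1,2,3,7] (by decide)
    rw [det_eq, unit_iff, hL, L1237] at m1237
    have m1245 := h2 ![1,2,4,5] (by decide)
    rw [det_eq, unit_iff, hL, L1245] at m1245
    have m1257 := h2 ![1,2,5,7] (by decide)
    rw [det_eq, unit_iff, hL, L1257] at m1257
    have m1567 := h2 ![1,5,6,7] (by decide)
    rw [det_eq, unit_iff, hL, L1567] at m1567
    have m2346 := h2 ![2,3,4,6] (by decide)
    rw [det_eq, unit_iff, hL, L2346] at m2346
    have m2367 := h2 ![2,3,6,7] (by decide)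
    rw [det_eq, unit_iff, hL, L2367] at m2367
    have m2457 := h2 ![2,4,5,7] (by decide)
    rw [det_eq, unit_iff, hL, L2457] at m2457
    have m2467 := h2 ![2,4,6,7] (by decide)
    rw [det_eq, unit_iff, hL, L2467] at m2467
    have m3456 := h2 ![3,4,5,6] (by decide)
    rw [det_eq, unit_iff, hL, L3456] at m3456
    have m4567 := h2 ![4,5,6,7] (by decide)
    rw [det_eq, unit_iff, hL, L4567] at m4567
    have hd : Λ 3 4 = 1 := m0124
    have hb : Λ 2 7 = 1 := m0137
    have ht : Λ 1 4 = 1 := m0234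
    have hs : Λ 0 7 = 1 := m1237
    simp only [hd, hb, ht, hs] at m0145 m0167 m0345 m0367 m1245 m1257 m1567 m2346 m2367 m2457 m2467 m3456 m4567 hL
    have hc := key12 (Λ 0 4) (Λ 0 5) (Λ 0 6) (Λ 1 5) (Λ 1 6) (Λ 1 7)
      (Λ 2 4) (Λ 2 5) (Λ 2 6) (Λ 3 5) (Λ 3 6) (Λ 3 7)
      ⟨m0145, m0156, m0167, m0345, m0356, m0367, m1245, m1257, m1567, m2346, m2367, m2457, m2467, m3456, m4567⟩
    rcases hc with h | h | h <;> rw [h] at hL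
    · exact Or.inl (hL.trans (by decide))
    · exact Or.inr (Or.inl (hL.trans (by decide)))
    · exact Or.inr (Or.inr (hL.trans (by decide)))
  · rintro (rfl | rfl | rfl) <;>
      refine ⟨by decide, fun v hv => ?_⟩ <;>
      rw [det_eq, unit_iff] <;> fin_cases hv <;> decide
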